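/- Let V : ℂ^D → ℂ^L ⊗ ℂ^S be an isometry, M_z := V†(|z⟩⟨z| ⊗ Id_S)V, and compress(V) := Σ_z |z⟩ ⊗ √(M_z). Then for every f : [L] → {±1}, writing O_f := Σ_z f(z)|z⟩⟨z|, we have compress(V)†·(O_f ⊗ Id_D)·compress(V) = V†·(O_f ⊗ Id_S)·V. -/
import Mathlib


open Matrix
open scoped ComplexOrder

/-- `compress` compresses: for every sign function `f : [L] → {±1}`,
`compress(V)†·(O_f ⊗ Id_D)·compress(V) = V†·(O_f ⊗ Id_S)·V`. -/
theorem compress_compresses (D L S : ℕ)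
    (V : Matrix (Fin L × Fin S) (Fin D) ℂ) (hV : Vᴴ * V = 1)
    (M : Fin L → Matrix (Fin D) (Fin D) ℂ)
    (hM : ∀ z, M z =
      Vᴴ * (Matrix.diagonal fun p : Fin L × Fin S => if p.1 = z then (1 : ℂ) else 0) * V)
    (Q : Fin L → Matrix (Fin D) (Fin D) ℂ)
    (hQ : ∀ z, (Q z).PosSemidef ∧ Q z * Q z = M z)
    (C : Matrix (Fin L × Fin D) (Fin D) ℂ)
    (hC : ∀ z d u, C (z, d) u = Q z d u)
    (f : Fin L → ℂ) (hf : ∀ z, f z = 1 ∨ f z = -1) :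
    Cᴴ * (Matrix.diagonal fun p : Fin L × Fin D => f p.1) * C
      = Vᴴ * (Matrix.diagonal fun p : Fin L × Fin S => f p.1) * V := by
  have hdiag : ∀ (n : ℕ), (Matrix.diagonal fun p : Fin L × Fin n => f p.1)
      = ∑ z : Fin L, f z • Matrix.diagonal (fun p : Fin L × Fin n => if p.1 = z then (1:ℂ) else 0) := by
    intro n
    ext p q
    by_cases h : p = q
    · subst h
      simp [Matrix.sum_apply, Matrix.diagonal_apply_eq, mul_ite, mul_one, mul_zero,
        Finset.sum_ite_eq]
    · simp [Matrix.sum_apply, Matrix.diagonal_apply_ne _ h]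
  have hCz : ∀ z, Cᴴ * Matrix.diagonal (fun p : Fin L × Fin D => if p.1 = z then (1:ℂ) else 0) * C = M z := by
    intro z
    have hq := (hQ z).1.isHermitian
    rw [← (hQ z).2]
    nth_rewrite 1 [← hq.eq]
    ext i j
    simp [Matrix.mul_apply, Matrix.conjTranspose_apply, Matrix.diagonal_apply, hC,
      Fintype.sum_prod_type, mul_ite, ite_mul, mul_zero, zero_mul, mul_one,
      Finset.sum_ite_eq, Finset.sum_ite_eq', Finset.mul_sum, Finset.sum_mul, mul_comm]
  have hVz : ∀ z, Vᴴ * Matrix.diagonal (fun p : Fin L × Fin S => if p.1 = z then (1:ℂ) else 0) * V = M z := fun z => (hM z).symm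
  rw [hdiag D, hdiag S, Matrix.mul_sum, Matrix.mul_sum, Matrix.sum_mul, Matrix.sum_mul]
  refine Finset.sum_congr rfl fun z _ => ?_
  rw [Matrix.mul_smul, Matrix.smul_mul, Matrix.mul_smul, Matrix.smul_mul, hCz, hVz]
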